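/- arXiv:1904.01841 — 7 statements merged into one kernel-verified Lean document; each statement's English description precedes it below -/
import Mathlib

section
/- The function f(x) = N·√(p·x² + (1−p)) / (p·x + (1−p) + (N−1)·√(p·x² + (1−p))) is strictly increasing for x > 1, whenever 0 < p < 1 and N ≥ 2. -/
theorem stmt_3 (N : ℕ) (hN : 2 ≤ N) (p : ℝ) (hp0 : 0 < p) (hp1 : p < 1) :
    StrictMonoOn (fun x : ℝ =>
      (N : ℝ) * Real.sqrt (p * x ^ 2 + (1 - p)) /
        (p * x + (1 - p) + ((N : ℝ) - 1) * Real.sqrt (p * x ^ 2 + (1 - p))))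
      (Set.Ioi 1) := by
  intro a ha b hb hab
  simp only [Set.mem_Ioi] at ha hb
  have hq : (0:ℝ) < 1 - p := by linarith
  have hNpos : (0:ℝ) < N := by positivity
  have hN1 : (0:ℝ) ≤ (N:ℝ) - 1 := by
    have : (2:ℝ) ≤ N := by exact_mod_cast hN
    linarith
  have hia : (0:ℝ) < p * a ^ 2 + (1 - p) := by nlinarith
  have hib : (0:ℝ) < p * b ^ 2 + (1 - p) := by nlinarith
  set sa := Real.sqrt (p * a ^ 2 + (1 - p)) with hsa
  set sb := Real.sqrt (p * b ^ 2 + (1 - p)) with hsb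
  have hsa0 : 0 < sa := Real.sqrt_pos.mpr hia
  have hsb0 : 0 < sb := Real.sqrt_pos.mpr hib
  have hsa2 : sa ^ 2 = p * a ^ 2 + (1 - p) := Real.sq_sqrt hia.le
  have hsb2 : sb ^ 2 = p * b ^ 2 + (1 - p) := Real.sq_sqrt hib.le
  have hda : 0 < p * a + (1 - p) + ((N:ℝ) - 1) * sa := by nlinarith
  have hdb : 0 < p * b + (1 - p) + ((N:ℝ) - 1) * sb := by nlinarith
  simp only
  rw [div_lt_div_iff₀ hda hdb]
  -- key: sa * (p*b + (1-p)) < sb * (p*a + (1-p))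
  have hpa : 0 < p * a + (1 - p) := by nlinarith
  have hpb : 0 < p * b + (1 - p) := by nlinarith
  have key : sa * (p * b + (1 - p)) < sb * (p * a + (1 - p)) := by
    have hsq : (sa * (p * b + (1 - p))) ^ 2 < (sb * (p * a + (1 - p))) ^ 2 := by
      have h1 : (sa * (p * b + (1 - p))) ^ 2
          = (p * a ^ 2 + (1 - p)) * (p * b + (1 - p)) ^ 2 := by
        rw [mul_pow, hsa2]
      have h2 : (sb * (p * a + (1 - p))) ^ 2
          = (p * b ^ 2 + (1 - p)) * (p * a + (1 - p)) ^ 2 := by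
        rw [mul_pow, hsb2]
      rw [h1, h2]
      have hE : (p * b ^ 2 + (1 - p)) * (p * a + (1 - p)) ^ 2
          - (p * a ^ 2 + (1 - p)) * (p * b + (1 - p)) ^ 2
          = p * (1 - p) * (b - a) * ((a + b - 2) + 2 * p * (a - 1) * (b - 1)) := by
        ring
      have hpos : 0 < p * (1 - p) * (b - a) * ((a + b - 2) + 2 * p * (a - 1) * (b - 1)) := by
        have h3 : 0 < (a + b - 2) + 2 * p * (a - 1) * (b - 1) := by
          have := mul_pos (mul_pos hp0 (sub_pos.mpr ha)) (sub_pos.mpr hb)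
          nlinarith
        exact mul_pos (mul_pos (mul_pos hp0 hq) (sub_pos.mpr hab)) h3
      linarith
    exact lt_of_pow_lt_pow_left₀ 2 (by positivity) hsq
  have expand : (N:ℝ) * sa * (p * b + (1 - p) + ((N:ℝ) - 1) * sb)
      - (N:ℝ) * sb * (p * a + (1 - p) + ((N:ℝ) - 1) * sa)
      = (N:ℝ) * (sa * (p * b + (1 - p)) - sb * (p * a + (1 - p))) := by ring
  have := mul_pos hNpos (sub_pos.mpr key)
  linarith
end

section
/- For the two-platform game with costs c₁, c₂ > 0 and bandwidth μ > 0, the best-response equations λ₁ = √((1 + λ₂/μ)/c₁) and λ₂ = √((1 + λ₁/μ)/c₂) have a unique solution with λ₁ > 0 and λ₂ > 0. -/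
private lemma sqrt_le_aux {u ε : ℝ} (hu : 0 ≤ u) (hε : 0 < ε) :
    Real.sqrt u ≤ ε * u + 1 / (4 * ε) := by
  have key : 4 * ε * Real.sqrt u ≤ 4 * ε^2 * u + 1 := by
    nlinarith [sq_nonneg (2 * ε * Real.sqrt u - 1), Real.sq_sqrt hu]
  rw [show ε * u + 1 / (4 * ε) = (4 * ε^2 * u + 1) / (4 * ε) by field_simp,
    le_div_iff₀ (by positivity)]
  nlinarith [key]

private lemma uniq_aux (c₁ c₂ μ : ℝ) (hc₁ : 0 < c₁) (hc₂ : 0 < c₂) (hμ : 0 < μ)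
    {a₁ a₂ b₁ b₂ : ℝ} (ha₁ : 0 < a₁) (ha₂ : 0 < a₂) (hb₁ : 0 < b₁) (hb₂ : 0 < b₂)
    (ea₁ : a₁ = Real.sqrt ((1 + a₂ / μ) / c₁)) (ea₂ : a₂ = Real.sqrt ((1 + a₁ / μ) / c₂))
    (eb₁ : b₁ = Real.sqrt ((1 + b₂ / μ) / c₁)) (eb₂ : b₂ = Real.sqrt ((1 + b₁ / μ) / c₂)) :
    a₁ = b₁ ∧ a₂ = b₂ := by
  have ha₁' : a₁ ^ 2 = (1 + a₂ / μ) / c₁ := by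
    rw [ea₁]; exact Real.sq_sqrt (by positivity)
  have ha₂' : a₂ ^ 2 = (1 + a₁ / μ) / c₂ := by
    rw [ea₂]; exact Real.sq_sqrt (by positivity)
  have hb₁' : b₁ ^ 2 = (1 + b₂ / μ) / c₁ := by
    rw [eb₁]; exact Real.sq_sqrt (by positivity)
  have hb₂' : b₂ ^ 2 = (1 + b₁ / μ) / c₂ := by
    rw [eb₂]; exact Real.sq_sqrt (by positivity)
  have Ha₁ : μ * c₁ * a₁ ^ 2 = μ + a₂ := by field_simp at ha₁'; linarith
  have Ha₂ : μ * c₂ * a₂ ^ 2 = μ + a₁ := by field_simp at ha₂'; linarith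
  have Hb₁ : μ * c₁ * b₁ ^ 2 = μ + b₂ := by field_simp at hb₁'; linarith
  have Hb₂ : μ * c₂ * b₂ ^ 2 = μ + b₁ := by field_simp at hb₂'; linarith
  -- difference equations
  have h1 : (a₁ - b₁) * ((a₁ + b₁) * c₁ * μ) = a₂ - b₂ := by linear_combination Ha₁ - Hb₁
  have h2 : (a₂ - b₂) * ((a₂ + b₂) * c₂ * μ) = a₁ - b₁ := by linear_combination Ha₂ - Hb₂
  -- the contraction factor exceeds 1
  have key : c₁ * c₂ * μ ^ 2 * a₁ * a₂ > 1 := by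
    have h3 : μ * c₁ * a₁ ^ 2 > a₂ := by linarith
    have h4 : μ * c₂ * a₂ ^ 2 > a₁ := by linarith
    have h5 : (μ * c₁ * a₁ ^ 2) * (μ * c₂ * a₂ ^ 2) > a₂ * a₁ := by
      calc (μ * c₁ * a₁ ^ 2) * (μ * c₂ * a₂ ^ 2) > a₂ * (μ * c₂ * a₂ ^ 2) :=
            mul_lt_mul_of_pos_right h3 (by positivity)
        _ > a₂ * a₁ := mul_lt_mul_of_pos_left h4 ha₂
    have ha : 0 < a₁ * a₂ := mul_pos ha₁ ha₂
    have hgt : 1 * (a₁ * a₂) < (c₁ * c₂ * μ ^ 2 * a₁ * a₂) * (a₁ * a₂) := by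
      calc 1 * (a₁ * a₂) = a₂ * a₁ := by ring
        _ < (μ * c₁ * a₁ ^ 2) * (μ * c₂ * a₂ ^ 2) := h5
        _ = (c₁ * c₂ * μ ^ 2 * a₁ * a₂) * (a₁ * a₂) := by ring
    exact lt_of_mul_lt_mul_right hgt ha.le
  have hK : (a₁ + b₁) * (a₂ + b₂) * c₁ * c₂ * μ ^ 2 > 1 := by
    have hpos : 0 < c₁ * c₂ * μ ^ 2 * (a₁ * b₂ + b₁ * a₂ + b₁ * b₂) := by positivity
    have expand : (a₁ + b₁) * (a₂ + b₂) * c₁ * c₂ * μ ^ 2 =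
        c₁ * c₂ * μ ^ 2 * a₁ * a₂ + c₁ * c₂ * μ ^ 2 * (a₁ * b₂ + b₁ * a₂ + b₁ * b₂) := by
      ring
    rw [expand]; linarith
  have h6 : (a₁ - b₁) * ((a₁ + b₁) * (a₂ + b₂) * c₁ * c₂ * μ ^ 2) = a₁ - b₁ := by
    linear_combination ((a₂ + b₂) * c₂ * μ) * h1 + h2
  have h7 : a₁ = b₁ := by
    by_contra hne
    have hne' : a₁ - b₁ ≠ 0 := sub_ne_zero.mpr hne
    have := mul_left_cancel₀ hne' (h6.trans (mul_one (a₁ - b₁)).symm)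
    linarith
  refine ⟨h7, ?_⟩
  have : a₂ - b₂ = 0 := by rw [← h1, h7]; ring
  linarith

theorem stmt_5 (c₁ c₂ μ : ℝ) (hc₁ : 0 < c₁) (hc₂ : 0 < c₂) (hμ : 0 < μ) :
    ∃! lam : ℝ × ℝ, 0 < lam.1 ∧ 0 < lam.2 ∧
      lam.1 = Real.sqrt ((1 + lam.2 / μ) / c₁) ∧
      lam.2 = Real.sqrt ((1 + lam.1 / μ) / c₂) := by
  set G : ℝ → ℝ := fun x => Real.sqrt ((1 + x / μ) / c₂) with hG
  set h : ℝ → ℝ := fun x => Real.sqrt ((1 + G x / μ) / c₁) with hh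
  set C : ℝ := μ + μ / 2 + 1 / (2 * c₂ * μ) + 1 / (4 * c₁ * μ) with hC
  have hCpos : 0 < C := by positivity
  set M : ℝ := 2 * C + 1 with hM
  have hMpos : 0 < M := by positivity
  have hcont : Continuous fun x => h x - x := by
    simp only [hh, hG]; fun_prop
  -- bound: h M ≤ C + M/2
  have hGM : G M ≤ μ / 2 + M / 2 + 1 / (2 * c₂ * μ) := by
    have hb := sqrt_le_aux (u := (1 + M / μ) / c₂) (ε := c₂ * μ / 2)
      (by positivity) (by positivity)
    have heq : c₂ * μ / 2 * ((1 + M / μ) / c₂) = μ / 2 + M / 2 := by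
      field_simp
    have heq2 : (1 : ℝ) / (4 * (c₂ * μ / 2)) = 1 / (2 * c₂ * μ) := by
      rw [show (4 : ℝ) * (c₂ * μ / 2) = 2 * c₂ * μ by ring]
    rw [heq, heq2] at hb
    exact hb
  have hGnonneg : 0 ≤ G M := Real.sqrt_nonneg _
  have hhM : h M ≤ C + M / 2 := by
    have hb := sqrt_le_aux (u := (1 + G M / μ) / c₁) (ε := c₁ * μ)
      (by positivity) (by positivity)
    have heq : c₁ * μ * ((1 + G M / μ) / c₁) = μ + G M := by
      field_simp
    have heq2 : (1 : ℝ) / (4 * (c₁ * μ)) = 1 / (4 * c₁ * μ) := by rw [mul_assoc]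
    rw [heq, heq2] at hb
    simp only [hh, hC]
    linarith
  -- IVT
  have h0 : (0 : ℝ) ≤ h 0 - 0 := by
    simp only [sub_zero]; exact Real.sqrt_nonneg _
  have hMneg : h M - M ≤ 0 := by
    have : C + M / 2 - M = -(1/2) := by rw [hM]; ring
    linarith
  have hmem : (0 : ℝ) ∈ Set.Icc ((fun x => h x - x) M) ((fun x => h x - x) 0) :=
    ⟨hMneg, h0⟩
  obtain ⟨x, hx, hfx⟩ := intermediate_value_Icc' (le_of_lt hMpos) hcont.continuousOn hmem
  have hfix : h x = x := by
    have := hfx; simp only at this; linarith [this]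
  have hxpos : 0 < x := by
    rw [← hfix, hh]
    apply Real.sqrt_pos.mpr
    have : 0 ≤ G x := Real.sqrt_nonneg _
    positivity
  have hGxpos : 0 < G x := by
    rw [hG]
    apply Real.sqrt_pos.mpr
    have hx0 : 0 ≤ x := hx.1
    positivity
  refine ⟨(x, G x), ⟨hxpos, hGxpos, hfix.symm, rfl⟩, ?_⟩
  rintro ⟨b₁, b₂⟩ ⟨hb₁, hb₂, e₁, e₂⟩
  obtain ⟨u1, u2⟩ := uniq_aux c₁ c₂ μ hc₁ hc₂ hμ hb₁ hb₂ hxpos hGxpos e₁ e₂ hfix.symm rfl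
  exact Prod.ext u1 u2
end

section
/- In the two-platform case, the equilibrium rates strictly exceed the socially optimal rates: if (λ₁*, λ₂*) solves λᵢ = √((1 + λⱼ/μ)/cᵢ) and (λ₁**, λ₂**) solves λᵢ = √((1 + λⱼ/μ)/(cᵢ + 1/(λⱼμ))) (for {i,j} = {1,2}), both in positive reals, then λ₁* ≥ λ₁** and λ₂* ≥ λ₂**. -/
theorem stmt_7 (c₁ c₂ μ : ℝ) (hc₁ : 0 < c₁) (hc₂ : 0 < c₂) (hμ : 0 < μ)
    (l₁ l₂ m₁ m₂ : ℝ) (hl₁ : 0 < l₁) (hl₂ : 0 < l₂) (hm₁ : 0 < m₁) (hm₂ : 0 < m₂)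
    (he₁ : l₁ = Real.sqrt ((1 + l₂ / μ) / c₁))
    (he₂ : l₂ = Real.sqrt ((1 + l₁ / μ) / c₂))
    (ho₁ : m₁ = Real.sqrt ((1 + m₂ / μ) / (c₁ + 1 / (m₂ * μ))))
    (ho₂ : m₂ = Real.sqrt ((1 + m₁ / μ) / (c₂ + 1 / (m₁ * μ)))) :
    l₁ ≥ m₁ ∧ l₂ ≥ m₂ := by
  -- squared equations
  have hE₁ : l₁ ^ 2 = (1 + l₂ / μ) / c₁ := by
    rw [he₁, Real.sq_sqrt]; positivity
  have hE₂ : l₂ ^ 2 = (1 + l₁ / μ) / c₂ := by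
    rw [he₂, Real.sq_sqrt]; positivity
  have hF₁ : m₁ ^ 2 = (1 + m₂ / μ) / (c₁ + 1 / (m₂ * μ)) := by
    rw [ho₁, Real.sq_sqrt]; positivity
  have hF₂ : m₂ ^ 2 = (1 + m₁ / μ) / (c₂ + 1 / (m₁ * μ)) := by
    rw [ho₂, Real.sq_sqrt]; positivity
  -- cleared equalities for the Nash equilibrium
  have hE₁' : μ * c₁ * l₁ ^ 2 = μ + l₂ := by
    field_simp at hE₁; nlinarith [hE₁]
  have hE₂' : μ * c₂ * l₂ ^ 2 = μ + l₁ := by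
    field_simp at hE₂; nlinarith [hE₂]
  -- strict inequalities for the social optimum
  have hC₁ : μ * c₁ * m₁ ^ 2 < μ + m₂ := by
    have hd : (0:ℝ) < c₁ + 1 / (m₂ * μ) := by positivity
    rw [eq_div_iff (ne_of_gt hd)] at hF₁
    have hq : m₁ ^ 2 * (c₁ * (m₂ * μ) + 1) * μ = (μ + m₂) * (m₂ * μ) := by
      field_simp at hF₁; linear_combination μ * hF₁
    have hq' : m₁ ^ 2 * (c₁ * (m₂ * μ) + 1) = (μ + m₂) * m₂ :=
      mul_right_cancel₀ (ne_of_gt hμ) (by linarith [hq])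
    -- so μ c₁ m₁² m₂ + m₁² = (μ + m₂) m₂, hence μ c₁ m₁² m₂ < (μ+m₂) m₂
    have h5 : μ * c₁ * m₁ ^ 2 * m₂ < (μ + m₂) * m₂ := by nlinarith [sq_nonneg m₁, hq']
    exact lt_of_mul_lt_mul_right h5 (le_of_lt hm₂)
  have hC₂ : μ * c₂ * m₂ ^ 2 < μ + m₁ := by
    have hd : (0:ℝ) < c₂ + 1 / (m₁ * μ) := by positivity
    rw [eq_div_iff (ne_of_gt hd)] at hF₂
    have hq : m₂ ^ 2 * (c₂ * (m₁ * μ) + 1) * μ = (μ + m₁) * (m₁ * μ) := by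
      field_simp at hF₂; linear_combination μ * hF₂
    have hq' : m₂ ^ 2 * (c₂ * (m₁ * μ) + 1) = (μ + m₁) * m₁ :=
      mul_right_cancel₀ (ne_of_gt hμ) (by linarith [hq])
    have h5 : μ * c₂ * m₂ ^ 2 * m₁ < (μ + m₁) * m₁ := by nlinarith [sq_nonneg m₂, hq']
    exact lt_of_mul_lt_mul_right h5 (le_of_lt hm₁)
  clear he₁ he₂ ho₁ ho₂ hE₁ hE₂ hF₁ hF₂
  -- if one coordinate of m exceeds l, so does the other
  have step1 : l₁ < m₁ → l₂ < m₂ := by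
    intro h1
    have hsq : l₁ ^ 2 < m₁ ^ 2 := pow_lt_pow_left₀ h1 hl₁.le two_ne_zero
    have := mul_lt_mul_of_pos_left hsq (mul_pos hμ hc₁)
    linarith
  have step2 : l₂ < m₂ → l₁ < m₁ := by
    intro h2
    have hsq : l₂ ^ 2 < m₂ ^ 2 := pow_lt_pow_left₀ h2 hl₂.le two_ne_zero
    have := mul_lt_mul_of_pos_left hsq (mul_pos hμ hc₂)
    linarith
  by_contra h
  push_neg at h
  have key : l₁ < m₁ ∧ l₂ < m₂ := by
    rcases lt_or_ge l₁ m₁ with h1 | h1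
    · exact ⟨h1, step1 h1⟩
    · exact absurd (step2 (h h1)) (not_lt.2 h1)
  obtain ⟨h1, h2⟩ := key
  have hu : 0 < m₁ - l₁ := by linarith
  have hv : 0 < m₂ - l₂ := by linarith
  have hA : μ * c₁ * (m₁ ^ 2 - l₁ ^ 2) < m₂ - l₂ := by linarith
  have hB : μ * c₂ * (m₂ ^ 2 - l₂ ^ 2) < m₁ - l₁ := by linarith
  have h0a : 0 ≤ μ * c₁ * (m₁ ^ 2 - l₁ ^ 2) :=
    mul_nonneg (mul_pos hμ hc₁).le
      (sub_nonneg.2 (pow_le_pow_left₀ hl₁.le h1.le 2))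
  have h0b : 0 ≤ μ * c₂ * (m₂ ^ 2 - l₂ ^ 2) :=
    mul_nonneg (mul_pos hμ hc₂).le
      (sub_nonneg.2 (pow_le_pow_left₀ hl₂.le h2.le 2))
  have hP : (μ * c₁ * (m₁ ^ 2 - l₁ ^ 2)) * (μ * c₂ * (m₂ ^ 2 - l₂ ^ 2)) <
      (m₂ - l₂) * (m₁ - l₁) := mul_lt_mul'' hA hB h0a h0b
  -- divide hP by (m₁-l₁)(m₂-l₂) > 0
  have hK : μ * c₁ * (μ * c₂) * ((m₁ + l₁) * (m₂ + l₂)) < 1 := by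
    have h3 : μ * c₁ * (μ * c₂) * ((m₁ + l₁) * (m₂ + l₂)) * ((m₁ - l₁) * (m₂ - l₂)) <
        1 * ((m₁ - l₁) * (m₂ - l₂)) := by
      have hr : μ * c₁ * (μ * c₂) * ((m₁ + l₁) * (m₂ + l₂)) * ((m₁ - l₁) * (m₂ - l₂)) =
          (μ * c₁ * (m₁ ^ 2 - l₁ ^ 2)) * (μ * c₂ * (m₂ ^ 2 - l₂ ^ 2)) := by ring
      rw [hr, one_mul]
      linarith [hP]
    exact lt_of_mul_lt_mul_right h3 (le_of_lt (mul_pos hu hv))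
  -- from the Nash equations, μ² c₁ c₂ l₁ l₂ > 1
  have hL : (μ * c₁ * l₁ ^ 2) * (μ * c₂ * l₂ ^ 2) = (μ + l₂) * (μ + l₁) := by
    rw [hE₁', hE₂']
  have hKL : 1 < μ * c₁ * (μ * c₂) * (l₁ * l₂) := by
    have h4 : 1 * (l₁ * l₂) < μ * c₁ * (μ * c₂) * (l₁ * l₂) * (l₁ * l₂) := by
      have hr : μ * c₁ * (μ * c₂) * (l₁ * l₂) * (l₁ * l₂) =
          (μ * c₁ * l₁ ^ 2) * (μ * c₂ * l₂ ^ 2) := by ring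
      rw [hr, hL, one_mul]
      have hx : (μ + l₂) * (μ + l₁) = μ * μ + μ * l₁ + μ * l₂ + l₁ * l₂ := by ring
      linarith [hx, mul_pos hμ hμ, mul_pos hμ hl₁, mul_pos hμ hl₂]
    exact lt_of_mul_lt_mul_right h4 (le_of_lt (mul_pos hl₁ hl₂))
  -- but (m₁+l₁)(m₂+l₂) > l₁ l₂, contradiction
  have hG : l₁ * l₂ < (m₁ + l₁) * (m₂ + l₂) := by
    have hx : (m₁ + l₁) * (m₂ + l₂) = m₁ * m₂ + m₁ * l₂ + l₁ * m₂ + l₁ * l₂ := by ring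
    linarith [hx, mul_pos hm₁ hm₂, mul_pos hm₁ hl₂, mul_pos hl₁ hm₂]
  have := mul_lt_mul_of_pos_left hG (mul_pos (mul_pos hμ hc₁) (mul_pos hμ hc₂))
  linarith
end

section
/- The function g(λ) = √((1 + λ/μ)/(1/(λμ) + c)), defined for λ > 0 with fixed positive constants c and μ, is strictly increasing and concave in λ. -/
open Real Set

theorem stmt_8 (c μ : ℝ) (hc : 0 < c) (hμ : 0 < μ) :
    StrictMonoOn (fun lam : ℝ => Real.sqrt ((1 + lam / μ) / (1 / (lam * μ) + c)))
      (Set.Ioi 0) ∧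
    ConcaveOn ℝ (Set.Ioi 0)
      (fun lam : ℝ => Real.sqrt ((1 + lam / μ) / (1 / (lam * μ) + c))) := by
  set u : ℝ → ℝ := fun x => (x ^ 2 + μ * x) / (1 + c * μ * x) with hu_def
  set F : ℝ → ℝ := fun x => Real.sqrt (u x) with hF_def
  set P : ℝ → ℝ := fun x => (c * μ * x ^ 2 + 2 * x + μ) / (1 + c * μ * x) ^ 2 with hP_def
  set G : ℝ → ℝ := fun x => P x / (2 * Real.sqrt (u x)) with hG_def
  -- basic positivity facts
  have hden : ∀ x : ℝ, 0 < x → 0 < 1 + c * μ * x := fun x hx => by positivity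
  have hu_pos : ∀ x : ℝ, 0 < x → 0 < u x := by
    intro x hx
    have h1 : 0 < x ^ 2 + μ * x := by positivity
    exact div_pos h1 (hden x hx)
  -- equality of the two expressions on Ioi 0
  have heq : ∀ x ∈ Ioi (0 : ℝ),
      (fun lam : ℝ => Real.sqrt ((1 + lam / μ) / (1 / (lam * μ) + c))) x = F x := by
    intro x hx
    have hx0 : (0 : ℝ) < x := hx
    have h1 : x * μ ≠ 0 := by positivity
    have h2 : 1 / (x * μ) + c ≠ 0 := by positivity
    have h3 : (1 + c * μ * x) ≠ 0 := ne_of_gt (hden x hx0)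
    have : (1 + x / μ) / (1 / (x * μ) + c) = (x ^ 2 + μ * x) / (1 + c * μ * x) := by
      field_simp
      ring
    simp only [F, u, this]
  -- strict monotonicity
  have hmono : StrictMonoOn
      (fun lam : ℝ => Real.sqrt ((1 + lam / μ) / (1 / (lam * μ) + c))) (Set.Ioi 0) := by
    intro a ha b hb hab
    have ha0 : (0 : ℝ) < a := ha
    have hb0 : (0 : ℝ) < b := hb
    rw [heq a ha, heq b hb]
    apply Real.sqrt_lt_sqrt (le_of_lt (hu_pos a ha0))
    rw [hu_def, div_lt_div_iff₀ (hden a ha0) (hden b hb0)]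
    nlinarith [mul_pos (mul_pos hc hμ) (mul_pos (mul_pos ha0 hb0) (sub_pos.2 hab)),
      mul_pos hμ (sub_pos.2 hab), mul_pos (add_pos ha0 hb0) (sub_pos.2 hab)]
  refine ⟨hmono, ?_⟩
  -- derivatives
  have hu_deriv : ∀ x : ℝ, 0 < x → HasDerivAt u (P x) x := by
    intro x hx
    have hn : HasDerivAt (fun y : ℝ => y ^ 2 + μ * y) (2 * x + μ) x := by
      have := ((hasDerivAt_pow 2 x).add ((hasDerivAt_id x).const_mul μ))
      exact this.congr_deriv (by ring)
    have hd : HasDerivAt (fun y : ℝ => 1 + c * μ * y) (c * μ) x := by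
      simpa using ((hasDerivAt_id x).const_mul (c * μ)).const_add 1
    have := hn.div hd (ne_of_gt (hden x hx))
    apply this.congr_deriv
    rw [hP_def]
    have h3 : (1 + c * μ * x) ≠ 0 := ne_of_gt (hden x hx)
    field_simp
    ring
  have hF_deriv : ∀ x : ℝ, 0 < x → HasDerivAt F (G x) x := by
    intro x hx
    have hs := (Real.hasDerivAt_sqrt (ne_of_gt (hu_pos x hx))).comp x (hu_deriv x hx)
    apply hs.congr_deriv
    rw [hG_def]
    ring
  have hP_deriv : ∀ x : ℝ, 0 < x →
      HasDerivAt P ((2 - 2 * c * μ ^ 2) / (1 + c * μ * x) ^ 3) x := by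
    intro x hx
    have hn : HasDerivAt (fun y : ℝ => c * μ * y ^ 2 + 2 * y + μ) (c * μ * (2 * x) + 2) x := by
      have := (((hasDerivAt_pow 2 x).const_mul (c * μ)).add
        ((hasDerivAt_id x).const_mul 2)).add_const μ
      simpa using this.congr_deriv (by ring)
    have hd0 : HasDerivAt (fun y : ℝ => 1 + c * μ * y) (c * μ) x := by
      simpa using ((hasDerivAt_id x).const_mul (c * μ)).const_add 1
    have hd : HasDerivAt (fun y : ℝ => (1 + c * μ * y) ^ 2)
        (2 * (1 + c * μ * x) ^ 1 * (c * μ)) x := hd0.pow 2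
    have hden2 : ((1 + c * μ * x) ^ 2) ≠ 0 := pow_ne_zero 2 (ne_of_gt (hden x hx))
    have := hn.div hd hden2
    apply this.congr_deriv
    have h3 : (1 + c * μ * x) ≠ 0 := ne_of_gt (hden x hx)
    field_simp
    ring
  -- second derivative of F
  have hG_deriv : ∀ x : ℝ, 0 < x → ∃ q : ℝ, HasDerivAt G q x ∧ q < 0 := by
    intro x hx
    have hs_pos : 0 < Real.sqrt (u x) := Real.sqrt_pos.2 (hu_pos x hx)
    set s : ℝ := Real.sqrt (u x) with hs_def
    have hs2 : s ^ 2 = u x := Real.sq_sqrt (le_of_lt (hu_pos x hx))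
    have hdenS : HasDerivAt (fun y : ℝ => 2 * Real.sqrt (u y)) (2 * G x) x := by
      have := ((Real.hasDerivAt_sqrt (ne_of_gt (hu_pos x hx))).comp x
        (hu_deriv x hx)).const_mul 2
      apply this.congr_deriv
      rw [hG_def]
      ring
    have hQ := (hP_deriv x hx).div hdenS (by positivity)
    refine ⟨_, hQ, ?_⟩
    -- show the quotient is negative
    have hden4 : (0 : ℝ) < (2 * s) ^ 2 := by positivity
    apply div_neg_of_neg_of_pos _ hden4
    -- numerator < 0
    have hGx : G x = P x / (2 * s) := rfl
    have hkey : 2 * ((2 - 2 * c * μ ^ 2) / (1 + c * μ * x) ^ 3) * u x - (P x) ^ 2 < 0 := by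
      have h3 : (0 : ℝ) < (1 + c * μ * x) := hden x hx
      have hval : 2 * ((2 - 2 * c * μ ^ 2) / (1 + c * μ * x) ^ 3) * u x - (P x) ^ 2
          = -(((c * μ) ^ 2 * x ^ 4 + 4 * (c * μ) * x ^ 3 + 6 * (c * μ) * μ * x ^ 2
              + 4 * (c * μ) * μ ^ 2 * x + μ ^ 2) / (1 + c * μ * x) ^ 4) := by
        rw [hP_def, hu_def]
        field_simp
        ring
      rw [hval]
      have hnum : (0 : ℝ) < (c * μ) ^ 2 * x ^ 4 + 4 * (c * μ) * x ^ 3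
          + 6 * (c * μ) * μ * x ^ 2 + 4 * (c * μ) * μ ^ 2 * x + μ ^ 2 := by positivity
      have := div_pos hnum (by positivity : (0:ℝ) < (1 + c * μ * x) ^ 4)
      linarith
    have hrw : (2 - 2 * c * μ ^ 2) / (1 + c * μ * x) ^ 3 * (2 * s) - P x * (2 * G x)
        = (2 * ((2 - 2 * c * μ ^ 2) / (1 + c * μ * x) ^ 3) * u x - (P x) ^ 2) / s := by
      rw [hGx, ← hs2]
      field_simp
    rw [hrw]
    exact div_neg_of_neg_of_pos hkey hs_pos
  -- concavity of F
  have hF_cont : ContinuousOn F (Ioi 0) := by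
    apply Real.continuous_sqrt.comp_continuousOn
    apply ContinuousOn.div (by fun_prop) (by fun_prop)
    intro x hx
    exact ne_of_gt (hden x hx)
  have hF_concave : StrictConcaveOn ℝ (Ioi (0 : ℝ)) F := by
    apply strictConcaveOn_of_deriv2_neg (convex_Ioi 0) hF_cont
    intro x hx
    rw [interior_Ioi] at hx
    have hx0 : (0 : ℝ) < x := hx
    obtain ⟨q, hq, hqneg⟩ := hG_deriv x hx0
    have hev : deriv F =ᶠ[nhds x] G := by
      filter_upwards [IsOpen.mem_nhds isOpen_Ioi hx] with y hy
      exact (hF_deriv y hy).deriv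
    have h2 : deriv (deriv F) x = q := by
      rw [Filter.EventuallyEq.deriv_eq hev]
      exact hq.deriv
    simpa [Function.iterate_succ, Function.iterate_zero, Function.comp] using h2 ▸ hqneg
  -- transfer concavity through the pointwise equality
  refine ⟨convex_Ioi 0, fun x hx y hy a b ha hb hab => ?_⟩
  have hmem : a • x + b • y ∈ Ioi (0 : ℝ) := (convex_Ioi 0) hx hy ha hb hab
  rw [heq x hx, heq y hy, heq _ hmem]
  exact hF_concave.concaveOn.2 hx hy ha hb hab
end

section
/- Let f(λ) = √((1 + λ/μ)/c₂) − μ(c₁λ² − 1) for λ > 0, with fixed positive c₁, c₂, μ. Then f has exactly one positive root. -/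
theorem stmt_10 (c₁ c₂ μ : ℝ) (hc₁ : 0 < c₁) (hc₂ : 0 < c₂) (hμ : 0 < μ) :
    ∃! lam : ℝ, 0 < lam ∧
      Real.sqrt ((1 + lam / μ) / c₂) - μ * (c₁ * lam ^ 2 - 1) = 0 := by
  set h : ℝ → ℝ := fun l => (Real.sqrt ((1 + l / μ) / c₂) + μ) / l ^ 2 with hh
  -- The equation is equivalent to h l = μ * c₁ for l > 0
  have hequiv : ∀ l : ℝ, 0 < l →
      ((Real.sqrt ((1 + l / μ) / c₂) - μ * (c₁ * l ^ 2 - 1) = 0) ↔ h l = μ * c₁) := by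
    intro l hl
    have hl2 : l ^ 2 ≠ 0 := pow_ne_zero 2 hl.ne'
    simp only [hh]
    rw [div_eq_iff hl2]
    constructor <;> intro H <;> linear_combination H
  -- h is strictly decreasing on positives
  have hanti : ∀ x y : ℝ, 0 < x → x < y → h y < h x := by
    intro x y hx hxy
    have hy : 0 < y := hx.trans hxy
    have hrw : ∀ l : ℝ, 0 < l →
        h l = Real.sqrt (((1 + l / μ) / c₂) / l ^ 4) + μ / l ^ 2 := by
      intro l hl
      have h4 : l ^ 4 = (l ^ 2) ^ 2 := by ring
      have hA : (0:ℝ) ≤ (1 + l / μ) / c₂ := by positivity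
      simp only [hh]
      rw [Real.sqrt_div hA, h4, Real.sqrt_sq (by positivity), add_div]
    rw [hrw x hx, hrw y hy]
    have hu : (0:ℝ) < 1 / μ := by positivity
    have h3 : x ^ 3 < y ^ 3 := by
      have := pow_lt_pow_left₀ hxy hx.le (n := 3) (by norm_num)
      exact this
    have h4 : x ^ 4 < y ^ 4 := by
      have := pow_lt_pow_left₀ hxy hx.le (n := 4) (by norm_num)
      exact this
    have h1' : (1 + y / μ) * x ^ 4 < (1 + x / μ) * y ^ 4 := by
      have h3' : 0 < y ^ 3 - x ^ 3 := by linarith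
      have key : 0 < (1 / μ) * (x * y * (y ^ 3 - x ^ 3)) :=
        mul_pos hu (mul_pos (mul_pos hx hy) h3')
      have hdy : y / μ = y * (1 / μ) := by ring
      have hdx : x / μ = x * (1 / μ) := by ring
      rw [hdy, hdx]
      nlinarith [key, h4]
    have h1 : ((1 + y / μ) / c₂) / y ^ 4 < ((1 + x / μ) / c₂) / x ^ 4 := by
      rw [div_div, div_div, div_lt_div_iff₀ (by positivity) (by positivity)]
      nlinarith [mul_lt_mul_of_pos_left h1' hc₂]
    have hx2 : x ^ 2 < y ^ 2 := by
      have := pow_lt_pow_left₀ hxy hx.le (n := 2) (by norm_num)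
      exact this
    have hs : Real.sqrt (((1 + y / μ) / c₂) / y ^ 4) <
        Real.sqrt (((1 + x / μ) / c₂) / x ^ 4) :=
      Real.sqrt_lt_sqrt (by positivity) h1
    have hm : μ / y ^ 2 < μ / x ^ 2 := by
      rw [div_lt_div_iff₀ (by positivity) (by positivity)]
      nlinarith
    linarith
  -- endpoints for the intermediate value theorem
  set b : ℝ := 1 / Real.sqrt c₁ with hb
  have hsqc : 0 < Real.sqrt c₁ := Real.sqrt_pos.mpr hc₁
  have hbpos : 0 < b := by positivity
  have hb2 : b ^ 2 = 1 / c₁ := by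
    rw [hb, div_pow, one_pow, sq, Real.mul_self_sqrt hc₁.le]
  set K : ℝ := (1 + 1 / μ) / c₂ with hK
  have hKpos : 0 < K := by positivity
  set sK : ℝ := Real.sqrt K with hsK
  have hsKnn : 0 ≤ sK := Real.sqrt_nonneg _
  set B : ℝ := max b (max 1 ((sK + μ) / (μ * c₁))) with hB
  have hbB : b ≤ B := le_max_left _ _
  have hB1 : (1:ℝ) ≤ B := le_trans (le_max_left _ _) (le_max_right _ _)
  have hB2 : (sK + μ) / (μ * c₁) ≤ B := le_trans (le_max_right _ _) (le_max_right _ _)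
  have hBpos : 0 < B := lt_of_lt_of_le hbpos hbB
  -- h b ≥ μ c₁
  have hlow : μ * c₁ ≤ h b := by
    have heq : h b = (Real.sqrt ((1 + b / μ) / c₂) + μ) / b ^ 2 := rfl
    rw [heq, le_div_iff₀ (by positivity), hb2]
    have hsnn : 0 ≤ Real.sqrt ((1 + b / μ) / c₂) := Real.sqrt_nonneg _
    have hμc : μ * c₁ * (1 / c₁) = μ := by field_simp
    linarith
  -- h B ≤ μ c₁
  have hhigh : h B ≤ μ * c₁ := by
    have harg : (1 + B / μ) / c₂ ≤ K * B ^ 2 := by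
      have h1 : (1 + B / μ) ≤ (1 + 1 / μ) * B ^ 2 := by
        have hBB : B ≤ B ^ 2 := by nlinarith
        have hu : (0:ℝ) < 1 / μ := by positivity
        have hd : B / μ = B * (1 / μ) := by ring
        rw [hd]
        nlinarith [mul_le_mul_of_nonneg_right hBB hu.le]
      calc (1 + B / μ) / c₂ ≤ ((1 + 1 / μ) * B ^ 2) / c₂ := by gcongr
        _ = K * B ^ 2 := by rw [hK]; ring
    have hsqB : Real.sqrt ((1 + B / μ) / c₂) ≤ sK * B := by
      calc Real.sqrt ((1 + B / μ) / c₂) ≤ Real.sqrt (K * B ^ 2) :=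
            Real.sqrt_le_sqrt harg
        _ = sK * B := by
            rw [Real.sqrt_mul hKpos.le, Real.sqrt_sq hBpos.le]
    have heq : h B = (Real.sqrt ((1 + B / μ) / c₂) + μ) / B ^ 2 := rfl
    rw [heq, div_le_iff₀ (by positivity)]
    have hB2' : sK + μ ≤ μ * c₁ * B := by
      rw [div_le_iff₀ (by positivity)] at hB2
      linarith
    nlinarith [mul_le_mul_of_nonneg_right hB2' hBpos.le, hsqB, hB1, hBpos, hμ]
  -- continuity and IVT
  have hcont : ContinuousOn h (Set.Icc b B) := by
    apply ContinuousOn.div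
    · apply Continuous.continuousOn
      fun_prop
    · fun_prop
    · intro x hx
      exact pow_ne_zero 2 (ne_of_gt (lt_of_lt_of_le hbpos hx.1))
  have hsub := intermediate_value_Icc' hbB hcont
  have hmem : μ * c₁ ∈ Set.Icc (h B) (h b) := ⟨hhigh, hlow⟩
  obtain ⟨l, hlmem, hleq⟩ := hsub hmem
  have hlpos : 0 < l := lt_of_lt_of_le hbpos hlmem.1
  refine ⟨l, ⟨hlpos, (hequiv l hlpos).mpr hleq⟩, ?_⟩
  rintro y ⟨hy, hyeq⟩
  have hyh := (hequiv y hy).mp hyeq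
  by_contra hne
  rcases lt_or_gt_of_ne hne with hlt | hgt
  · have := hanti y l hy hlt
    rw [hyh, hleq] at this
    exact lt_irrefl _ this
  · have := hanti l y hlpos hgt
    rw [hyh, hleq] at this
    exact lt_irrefl _ this
end

section
/- If c₁ → 0 while c₂ > 0, μ > 0 are fixed, then the two-platform Nash equilibrium rates satisfy λ₁* → ∞ and λ₂* → ∞, and the equilibrium social cost π(λ₁*, λ₂*) → ∞; in particular the price of anarchy is unbounded: for every M > 0 there exist costs with π(λ₁*, λ₂*)/π(λ₁**, λ₂**) > M. -/
open Filter

/-- Social cost of the two-platform game with costs `c₁, c₂` and bandwidth `μ`. -/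
noncomputable def socialCost (c₁ c₂ μ a b : ℝ) : ℝ :=
  ((a + b) / a) * (1 / (a + b) + 1 / μ) + c₁ * a +
    ((a + b) / b) * (1 / (a + b) + 1 / μ) + c₂ * b

lemma sqrt_tendsto_atTop : Tendsto Real.sqrt atTop atTop := by
  refine tendsto_atTop_atTop.2 fun b => ⟨(max b 0) ^ 2, fun x hx => ?_⟩
  calc b ≤ max b 0 := le_max_left _ _
    _ = Real.sqrt ((max b 0) ^ 2) := (Real.sqrt_sq (le_max_right _ _)).symm
    _ ≤ Real.sqrt x := Real.sqrt_le_sqrt hx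

theorem stmt_17 (c₂ μ : ℝ) (hc₂ : 0 < c₂) (hμ : 0 < μ) (l₁ l₂ : ℝ → ℝ)
    (heq : ∀ c₁ : ℝ, 0 < c₁ → 0 < l₁ c₁ ∧ 0 < l₂ c₁ ∧
      l₁ c₁ = Real.sqrt ((1 + l₂ c₁ / μ) / c₁) ∧
      l₂ c₁ = Real.sqrt ((1 + l₁ c₁ / μ) / c₂)) :
    Tendsto l₁ (nhdsWithin 0 (Set.Ioi 0)) atTop ∧
    Tendsto l₂ (nhdsWithin 0 (Set.Ioi 0)) atTop ∧
    Tendsto (fun c₁ => socialCost c₁ c₂ μ (l₁ c₁) (l₂ c₁))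
      (nhdsWithin 0 (Set.Ioi 0)) atTop ∧
    ∀ M : ℝ, 0 < M → ∃ c₁ : ℝ, 0 < c₁ ∧
      ∀ m : ℝ × ℝ, m ∈ Set.Ioi (0 : ℝ) ×ˢ Set.Ioi (0 : ℝ) →
        IsMinOn (fun q : ℝ × ℝ => socialCost c₁ c₂ μ q.1 q.2)
          (Set.Ioi (0 : ℝ) ×ˢ Set.Ioi (0 : ℝ)) m →
        socialCost c₁ c₂ μ (l₁ c₁) (l₂ c₁) / socialCost c₁ c₂ μ m.1 m.2 > M := by
  have hmem : ∀ᶠ c in nhdsWithin (0:ℝ) (Set.Ioi 0), 0 < c :=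
    eventually_nhdsWithin_of_forall fun c hc => hc
  -- l₁ tendsto
  have h1 : Tendsto l₁ (nhdsWithin (0:ℝ) (Set.Ioi 0)) atTop := by
    refine tendsto_atTop_mono' _ ?_ (sqrt_tendsto_atTop.comp tendsto_inv_nhdsGT_zero)
    filter_upwards [hmem] with c hc
    obtain ⟨hl1, hl2, he1, _⟩ := heq c hc
    rw [he1]
    refine Real.sqrt_le_sqrt ?_
    simp only [Function.comp]
    rw [← one_div]
    gcongr
    nlinarith [div_pos hl2 hμ]
  -- l₂ tendsto
  have h2 : Tendsto l₂ (nhdsWithin (0:ℝ) (Set.Ioi 0)) atTop := by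
    have hg : Tendsto (fun c => Real.sqrt ((1 + l₁ c / μ) / c₂))
        (nhdsWithin (0:ℝ) (Set.Ioi 0)) atTop := by
      refine sqrt_tendsto_atTop.comp ?_
      refine Tendsto.atTop_div_const hc₂ ?_
      exact tendsto_atTop_add_const_left _ 1 (h1.atTop_div_const hμ)
    refine hg.congr' ?_
    filter_upwards [hmem] with c hc
    exact ((heq c hc).2.2.2).symm
  -- social cost tendsto
  have h3 : Tendsto (fun c₁ => socialCost c₁ c₂ μ (l₁ c₁) (l₂ c₁))
      (nhdsWithin (0:ℝ) (Set.Ioi 0)) atTop := by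
    refine tendsto_atTop_mono' _ ?_ (h2.const_mul_atTop hc₂)
    filter_upwards [hmem] with c hc
    obtain ⟨hl1, hl2, _, _⟩ := heq c hc
    unfold socialCost
    have t1 : 0 < ((l₁ c + l₂ c) / l₁ c) * (1 / (l₁ c + l₂ c) + 1 / μ) := by positivity
    have t2 : 0 < ((l₁ c + l₂ c) / l₂ c) * (1 / (l₁ c + l₂ c) + 1 / μ) := by positivity
    have t3 : 0 < c * l₁ c := by positivity
    linarith
  refine ⟨h1, h2, h3, ?_⟩
  intro M hM
  have hev : ∀ᶠ c in nhdsWithin (0:ℝ) (Set.Ioi 0),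
      M * (3 + 4 / μ + c₂) < socialCost c c₂ μ (l₁ c) (l₂ c) :=
    (tendsto_atTop.1 h3 (M * (3 + 4 / μ + c₂) + 1)).mono fun c h => by linarith
  have hlt1 : ∀ᶠ c in nhdsWithin (0:ℝ) (Set.Ioi 0), c < 1 :=
    eventually_nhdsWithin_of_eventually_nhds (eventually_lt_nhds one_pos)
  obtain ⟨c₁, hbig, hc1lt, hc1pos⟩ := (hev.and (hlt1.and hmem)).exists
  refine ⟨c₁, hc1pos, fun m hm hmin => ?_⟩
  obtain ⟨hm1, hm2⟩ := hm
  simp only [Set.mem_Ioi] at hm1 hm2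
  have h11 : ((1:ℝ), (1:ℝ)) ∈ Set.Ioi (0:ℝ) ×ˢ Set.Ioi (0:ℝ) := by
    constructor <;> simp
  have hub : socialCost c₁ c₂ μ m.1 m.2 ≤ socialCost c₁ c₂ μ 1 1 := hmin h11
  have hval : socialCost c₁ c₂ μ 1 1 = 2 + 4 / μ + c₁ + c₂ := by
    unfold socialCost; field_simp; ring
  have hpos : 0 < socialCost c₁ c₂ μ m.1 m.2 := by
    unfold socialCost; positivity
  rw [gt_iff_lt, lt_div_iff₀ hpos]
  have : M * socialCost c₁ c₂ μ m.1 m.2 ≤ M * (2 + 4 / μ + c₁ + c₂) := by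
    rw [← hval]; exact mul_le_mul_of_nonneg_left hub hM.le
  nlinarith
end

section
/- Fix A > 0 and 0 < c₁ < c₂. The no-deviation discount threshold δ(c) = (√(A/(c+k)) − √(A/c))² / (2√(A/(c+k))·(λ* − √(A/c))) is decreasing in c when k > 0 and λ* are held fixed with λ* > √(A/c₁); hence the cheapest platform has the largest deviation threshold: δ(c₁) ≥ δ(c₂). -/
theorem stmt_19 (A k lamS c₁ c₂ : ℝ) (hA : 0 < A) (hk : 0 < k)
    (hc₁ : 0 < c₁) (hc₂ : c₁ < c₂) (hlamS : lamS > Real.sqrt (A / c₁)) :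
    AntitoneOn (fun c : ℝ =>
        (Real.sqrt (A / (c + k)) - Real.sqrt (A / c)) ^ 2 /
          (2 * Real.sqrt (A / (c + k)) * (lamS - Real.sqrt (A / c))))
      (Set.Ici c₁) ∧
    (Real.sqrt (A / (c₂ + k)) - Real.sqrt (A / c₂)) ^ 2 /
        (2 * Real.sqrt (A / (c₂ + k)) * (lamS - Real.sqrt (A / c₂)))
      ≤ (Real.sqrt (A / (c₁ + k)) - Real.sqrt (A / c₁)) ^ 2 /
        (2 * Real.sqrt (A / (c₁ + k)) * (lamS - Real.sqrt (A / c₁))) := by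
  have key : AntitoneOn (fun c : ℝ =>
      (Real.sqrt (A / (c + k)) - Real.sqrt (A / c)) ^ 2 /
        (2 * Real.sqrt (A / (c + k)) * (lamS - Real.sqrt (A / c))))
      (Set.Ici c₁) := by
    intro a ha b hb hab
    simp only [Set.mem_Ici] at ha hb
    have hapos : 0 < a := lt_of_lt_of_le hc₁ ha
    have hbpos : 0 < b := lt_of_lt_of_le hc₁ hb
    simp only
    set sa := Real.sqrt (A / a) with hsa
    set sb := Real.sqrt (A / b) with hsb
    set ta := Real.sqrt (A / (a + k)) with hta
    set tb := Real.sqrt (A / (b + k)) with htb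
    have hsapos : 0 < sa := Real.sqrt_pos.mpr (by positivity)
    have hsbpos : 0 < sb := Real.sqrt_pos.mpr (by positivity)
    have htapos : 0 < ta := Real.sqrt_pos.mpr (by positivity)
    have htbpos : 0 < tb := Real.sqrt_pos.mpr (by positivity)
    -- s is antitone
    have hsba : sb ≤ sa := Real.sqrt_le_sqrt (by
      apply div_le_div_of_nonneg_left hA.le hapos hab)
    have hs1a : sa ≤ Real.sqrt (A / c₁) := Real.sqrt_le_sqrt (by
      apply div_le_div_of_nonneg_left hA.le hc₁ ha)
    have hlama : 0 < lamS - sa := by linarith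
    have hlamb : 0 < lamS - sb := by linarith
    -- t is antitone
    have htba : tb ≤ ta := Real.sqrt_le_sqrt (by
      apply div_le_div_of_nonneg_left hA.le (by linarith) (by linarith))
    -- t ≤ s
    have htsa : ta ≤ sa := Real.sqrt_le_sqrt (by
      apply div_le_div_of_nonneg_left hA.le hapos (by linarith))
    have htsb : tb ≤ sb := Real.sqrt_le_sqrt (by
      apply div_le_div_of_nonneg_left hA.le hbpos (by linarith))
    -- ratio r = s/t - 1
    set ra := sa / ta - 1 with hra
    set rb := sb / tb - 1 with hrb
    have hra0 : 0 ≤ ra := by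
      rw [hra, sub_nonneg, le_div_iff₀ htapos, one_mul]; exact htsa
    have hrb0 : 0 ≤ rb := by
      rw [hrb, sub_nonneg, le_div_iff₀ htbpos, one_mul]; exact htsb
    -- s/t = sqrt((c+k)/c)
    have hqa : sa / ta = Real.sqrt ((a + k) / a) := by
      rw [hsa, hta, ← Real.sqrt_div (by positivity)]
      congr 1
      field_simp
    have hqb : sb / tb = Real.sqrt ((b + k) / b) := by
      rw [hsb, htb, ← Real.sqrt_div (by positivity)]
      congr 1
      field_simp
    have hrba : rb ≤ ra := by
      rw [hra, hrb, hqa, hqb]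
      have : (b + k) / b ≤ (a + k) / a := by
        rw [div_le_div_iff₀ hbpos hapos]
        nlinarith
      linarith [Real.sqrt_le_sqrt this]
    -- factorization
    have heqa : sa - ta = ta * ra := by
      rw [hra]; field_simp
    have heqb : sb - tb = tb * rb := by
      rw [hrb]; field_simp
    rw [div_le_div_iff₀ (by positivity) (by positivity)]
    have h1 : tb * rb ^ 2 * (lamS - sa) ≤ ta * ra ^ 2 * (lamS - sb) := by
      apply mul_le_mul _ (by linarith) hlama.le (by positivity)
      exact mul_le_mul htba (pow_le_pow_left₀ hrb0 hrba 2) (by positivity) htapos.le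
    have h2 := mul_le_mul_of_nonneg_left h1 (show (0:ℝ) ≤ 2 * ta * tb by positivity)
    have e1 : (tb - sb) ^ 2 = (tb * rb) ^ 2 := by rw [← heqb]; ring
    have e2 : (ta - sa) ^ 2 = (ta * ra) ^ 2 := by rw [← heqa]; ring
    have g1 : (tb * rb) ^ 2 * (2 * ta * (lamS - sa))
        = 2 * ta * tb * (tb * rb ^ 2 * (lamS - sa)) := by ring
    have g2 : (ta * ra) ^ 2 * (2 * tb * (lamS - sb))
        = 2 * ta * tb * (ta * ra ^ 2 * (lamS - sb)) := by ring
    rw [e1, e2]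
    linarith [h2, g1, g2]
  refine ⟨key, key (Set.mem_Ici.mpr le_rfl) (Set.mem_Ici.mpr hc₂.le) hc₂.le⟩
end
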